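/- Let λ > 0, 0 < ε < 2λ, σ > 0, μ0 ∈ ℝ^P, and let Y have independent coordinates Y_i ~ N((μ0)_i, σ²). Define h : ℝ → ℝ by h(t) = 1 if t ≤ −λ, 0 if −λ < t < λ, −1 if t ≥ λ. Then Var[ (1/P) · (1/ε) Σ_{i=1}^P (h(Y_i + ε) − h(Y_i)) ] ≤ √2 / (√π · σ · P · ε). -/

import Mathlib

open MeasureTheory ProbabilityTheory
open scoped BigOperators NNReal ENNReal

noncomputable section

/-- The λ-derivative of the soft-thresholding map `t ↦ ST(t, λ)` away from `|t| = λ`: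
`h(t) = 1` if `t ≤ -λ`, `0` if `-λ < t < λ`, `-1` if `t ≥ λ`. -/
def hST (lam t : ℝ) : ℝ := if t ≤ -lam then 1 else if t < lam then 0 else -1

lemma my_pi_eval {ι : Type*} [Fintype ι] {α : ι → Type*} [∀ i, MeasurableSpace (α i)]
    (μ : ∀ i, Measure (α i)) [∀ i, IsProbabilityMeasure (μ i)] (i : ι) (s : Set (α i)) :
    Measure.pi μ (Function.eval i ⁻¹' s) = μ i s := by
  classical
  rw [Set.eval_preimage, Measure.pi_pi]
  rw [Finset.prod_eq_single i ?_ ?_]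
  · simp
  · intro j _ hj; simp [Function.update_of_ne hj]
  · intro h; exact absurd (Finset.mem_univ i) h

lemma my_indep_eval {ι : Type*} [Fintype ι] {α : ι → Type*} [∀ i, MeasurableSpace (α i)]
    (μ : ∀ i, Measure (α i)) [∀ i, IsProbabilityMeasure (μ i)] {i j : ι} (hij : i ≠ j) :
    IndepFun (Function.eval i) (Function.eval j) (Measure.pi μ) := by
  classical
  rw [indepFun_iff_measure_inter_preimage_eq_mul]
  intro s t _ _
  have hset : Function.eval i ⁻¹' s ∩ Function.eval j ⁻¹' t
      = Set.pi Set.univ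
        (Function.update (Function.update (fun k => (Set.univ : Set (α k))) i s) j t) := by
    ext y
    simp only [Set.mem_inter_iff, Set.mem_preimage, Set.mem_univ_pi]
    constructor
    · rintro ⟨h1, h2⟩ k
      rcases eq_or_ne k j with rfl | hkj
      · simpa using h2
      rcases eq_or_ne k i with rfl | hki
      · simpa [Function.update_of_ne hkj] using h1
      · simp [Function.update_of_ne hkj, Function.update_of_ne hki]
    · intro h
      refine ⟨?_, ?_⟩
      · have := h i; simpa [Function.update_of_ne hij] using this
      · have := h j; simpa using this
  rw [hset, Measure.pi_pi, my_pi_eval μ i s, my_pi_eval μ j t]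
  rw [Finset.prod_eq_mul i j hij ?_ ?_ ?_]
  · simp [Function.update_of_ne hij]
  · intro c _ hc; simp [Function.update_of_ne hc.2, Function.update_of_ne hc.1]
  · intro h; exact absurd (Finset.mem_univ i) h
  · intro h; exact absurd (Finset.mem_univ j) h

lemma hST_diff (lam ε : ℝ) (hlam : 0 < lam) (hε : 0 < ε) (hε2 : ε < 2 * lam) (t : ℝ) :
    hST lam (t + ε) - hST lam t
      = - (Set.Ioc (-lam - ε) (-lam) ∪ Set.Ico (lam - ε) lam).indicator 1 t := by
  set A := Set.Ioc (-lam - ε) (-lam) ∪ Set.Ico (lam - ε) lam with hA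
  rcases le_or_gt t (-lam - ε) with h1 | h1
  · have hmem : t ∉ A := by
      simp only [hA, Set.mem_union, Set.mem_Ioc, Set.mem_Ico]
      push_neg
      exact ⟨fun h => by linarith, fun h => by linarith⟩
    have ha : t + ε ≤ -lam := by linarith
    have hb : t ≤ -lam := by linarith
    simp only [hST, Set.indicator_of_notMem hmem, if_pos ha, if_pos hb]
    norm_num
  rcases le_or_gt t (-lam) with h2 | h2
  · have hmem : t ∈ A := Or.inl (Set.mem_Ioc.mpr ⟨h1, h2⟩)
    have ha : ¬ (t + ε ≤ -lam) := by linarith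
    have hb : t + ε < lam := by linarith
    simp only [hST, Set.indicator_of_mem hmem, if_neg ha, if_pos hb, if_pos h2, Pi.one_apply]
    norm_num
  rcases lt_or_ge t (lam - ε) with h3 | h3
  · have hmem : t ∉ A := by
      simp only [hA, Set.mem_union, Set.mem_Ioc, Set.mem_Ico]
      push_neg
      exact ⟨fun h => by linarith, fun h => by linarith⟩
    have ha : ¬ (t + ε ≤ -lam) := by linarith
    have hb : t + ε < lam := by linarith
    have hc : ¬ (t ≤ -lam) := by linarith
    have hd : t < lam := by linarith
    simp only [hST, Set.indicator_of_notMem hmem, if_neg ha, if_pos hb, if_neg hc, if_pos hd]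
    norm_num
  rcases lt_or_ge t lam with h4 | h4
  · have hmem : t ∈ A := Or.inr (Set.mem_Ico.mpr ⟨h3, h4⟩)
    have ha : ¬ (t + ε ≤ -lam) := by linarith
    have hb : ¬ (t + ε < lam) := by linarith
    have hc : ¬ (t ≤ -lam) := by linarith
    simp only [hST, Set.indicator_of_mem hmem, if_neg ha, if_neg hb, if_neg hc, if_pos h4,
      Pi.one_apply]
    norm_num
  · have hmem : t ∉ A := by
      simp only [hA, Set.mem_union, Set.mem_Ioc, Set.mem_Ico]
      push_neg
      exact ⟨fun h => by linarith, fun h => by linarith⟩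
    have ha : ¬ (t + ε ≤ -lam) := by linarith
    have hb : ¬ (t + ε < lam) := by linarith
    have hc : ¬ (t ≤ -lam) := by linarith
    have hd : ¬ (t < lam) := by linarith
    simp only [hST, Set.indicator_of_notMem hmem, if_neg ha, if_neg hb, if_neg hc, if_neg hd]
    norm_num

lemma my_gauss_bound (m : ℝ) {v : ℝ≥0} (hv : v ≠ 0) (s : Set ℝ) :
    gaussianReal m v s ≤ volume s * ENNReal.ofReal (Real.sqrt (2 * Real.pi * v))⁻¹ := by
  rw [gaussianReal_apply m hv s]
  calc ∫⁻ x in s, gaussianPDF m v x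
      ≤ ∫⁻ _ in s, ENNReal.ofReal (Real.sqrt (2 * Real.pi * v))⁻¹ := by
        refine lintegral_mono fun x => ?_
        refine ENNReal.ofReal_le_ofReal ?_
        rw [gaussianPDFReal]
        refine mul_le_of_le_one_right (by positivity) ?_
        refine Real.exp_le_one_iff.2 ?_
        have h0 : (0:ℝ) ≤ (x - m)^2 / (2 * (v:ℝ)) := by positivity
        rw [neg_div]
        linarith
    _ = volume s * ENNReal.ofReal (Real.sqrt (2 * Real.pi * v))⁻¹ := by
        rw [setLIntegral_const, mul_comm]

/-- **Variance bound for the normalized finite-difference DOF gradient of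
soft-thresholding.**  For `0 < ε < 2λ` and independent `Y_i ~ N((μ0)_i, σ²)`,
`Var[(1/P)(1/ε) Σ_i (h(Y_i + ε) - h(Y_i))] ≤ √2 / (√π · σ · P · ε)`. -/
theorem fd_dof_gradient_variance_bound
    {P : ℕ} (lam ε σ : ℝ) (hlam : 0 < lam) (hε : 0 < ε) (hε2 : ε < 2 * lam) (hσ : 0 < σ)
    (μ0 : Fin P → ℝ) :
    variance (fun y : Fin P → ℝ =>
        (1 / (P : ℝ)) * ((1 / ε) * ∑ i : Fin P, (hST lam (y i + ε) - hST lam (y i))))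
        (Measure.pi fun i => gaussianReal (μ0 i) ⟨σ ^ 2, sq_nonneg σ⟩)
      ≤ Real.sqrt 2 / (Real.sqrt Real.pi * σ * P * ε) := by
  classical
  rcases Nat.eq_zero_or_pos P with hP0 | hP0
  · subst hP0
    have hfun : (fun y : Fin 0 → ℝ =>
        (1 / ((0 : ℕ) : ℝ)) * ((1 / ε) * ∑ i : Fin 0, (hST lam (y i + ε) - hST lam (y i))))
        = (0 : (Fin 0 → ℝ) → ℝ) := by
      funext y; simp
    rw [hfun, variance_zero]
    simp
  have hπ : (0:ℝ) < Real.pi := Real.pi_pos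
  have hPpos : (0:ℝ) < (P:ℝ) := by exact_mod_cast hP0
  set v : ℝ≥0 := ⟨σ ^ 2, sq_nonneg σ⟩ with hvdef
  have hv0 : v ≠ 0 := by
    intro h
    have h2 : σ ^ 2 = 0 := congrArg NNReal.toReal h
    exact (pow_ne_zero 2 hσ.ne') h2
  set ν : Fin P → Measure ℝ := fun i => gaussianReal (μ0 i) v with hν
  haveI hprob : ∀ i, IsProbabilityMeasure (ν i) := fun i => by
    rw [hν]; infer_instance
  set μpi : Measure (Fin P → ℝ) := Measure.pi ν with hμpi
  haveI : IsProbabilityMeasure μpi := by rw [hμpi]; infer_instance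
  set A : Set ℝ := Set.Ioc (-lam - ε) (-lam) ∪ Set.Ico (lam - ε) lam with hA
  have hAm : MeasurableSet A := measurableSet_Ioc.union measurableSet_Ico
  set g : ℝ → ℝ := fun t => hST lam (t + ε) - hST lam t with hg
  have hgi : ∀ t, g t = - A.indicator 1 t := fun t => hST_diff lam ε hlam hε hε2 t
  have hgm : Measurable g := by
    have : g = fun t => - A.indicator 1 t := funext hgi
    rw [this]
    exact (measurable_one.indicator hAm).neg
  set X : Fin P → (Fin P → ℝ) → ℝ := fun i y => g (y i) with hX
  have hXm : ∀ i, Measurable (X i) := fun i => hgm.comp (measurable_pi_apply i)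
  have hXb : ∀ i (y : Fin P → ℝ), ‖X i y‖ ≤ 1 := by
    intro i y
    rw [hX]
    simp only [Real.norm_eq_abs]
    rw [hgi]
    by_cases h : y i ∈ A <;> simp [Set.indicator_apply, h]
  have hXmem : ∀ i, MemLp (X i) 2 μpi := fun i =>
    (memLp_top_of_bound (hXm i).aestronglyMeasurable 1
      (Filter.Eventually.of_forall (hXb i))).mono_exponent le_top
  have hpair : Set.Pairwise ↑(Finset.univ : Finset (Fin P))
      (fun i j => IndepFun (X i) (X j) μpi) := by
    intro i _ j _ hij
    exact (my_indep_eval ν hij).comp hgm hgm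
  have hsum : variance (∑ i : Fin P, X i) μpi = ∑ i : Fin P, variance (X i) μpi :=
    IndepFun.variance_sum (fun i _ => hXmem i) hpair
  set B : ℝ := Real.sqrt 2 * ε / (Real.sqrt Real.pi * σ) with hB
  have hvar_i : ∀ i, variance (X i) μpi ≤ B := by
    intro i
    have h1 : variance (X i) μpi ≤ μpi[(X i) ^ 2] :=
      variance_le_expectation_sq (hXm i).aestronglyMeasurable
    have h2 : (X i) ^ 2 = (Function.eval i ⁻¹' A).indicator (1 : (Fin P → ℝ) → ℝ) := by
      funext y
      simp only [Pi.pow_apply, hX]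
      rw [hgi]
      by_cases h : y i ∈ A <;>
        simp [Set.indicator_apply, h, Set.mem_preimage]
    have h3 : μpi[(X i) ^ 2] = (ν i A).toReal := by
      rw [h2, integral_indicator_one (hAm.preimage (measurable_pi_apply i)), hμpi, measureReal_def,
        my_pi_eval ν i A]
    have hsqrtv : Real.sqrt (2 * Real.pi * (v:ℝ)) = Real.sqrt 2 * Real.sqrt Real.pi * σ := by
      have hvc : (v:ℝ) = σ ^ 2 := rfl
      rw [hvc, Real.sqrt_mul (by positivity), Real.sqrt_mul (by norm_num), Real.sqrt_sq hσ.le]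
    have h4 : ν i A ≤ ENNReal.ofReal B := by
      calc ν i A ≤ volume A * ENNReal.ofReal (Real.sqrt (2 * Real.pi * (v:ℝ)))⁻¹ :=
            my_gauss_bound (μ0 i) hv0 A
        _ ≤ (ENNReal.ofReal ε + ENNReal.ofReal ε)
              * ENNReal.ofReal (Real.sqrt (2 * Real.pi * (v:ℝ)))⁻¹ := by
            refine mul_le_mul_left ?_ _
            refine (measure_union_le _ _).trans ?_
            rw [Real.volume_Ioc, Real.volume_Ico]
            have e1 : -lam - (-lam - ε) = ε := by ring
            have e2 : lam - (lam - ε) = ε := by ring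
            rw [e1, e2]
        _ = ENNReal.ofReal ((ε + ε) * (Real.sqrt 2 * Real.sqrt Real.pi * σ)⁻¹) := by
            rw [hsqrtv, ← ENNReal.ofReal_add hε.le hε.le, ← ENNReal.ofReal_mul (by positivity)]
        _ = ENNReal.ofReal B := by
            congr 1
            rw [hB]
            have hs2 : Real.sqrt 2 * Real.sqrt 2 = 2 := Real.mul_self_sqrt (by norm_num)
            have hsπ : Real.sqrt Real.pi ≠ 0 := by positivity
            field_simp
            linear_combination (-1 : ℝ) * hs2
    have h5 : (ν i A).toReal ≤ B := by
      refine ENNReal.toReal_le_of_le_ofReal ?_ h4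
      rw [hB]; positivity
    calc variance (X i) μpi ≤ μpi[(X i) ^ 2] := h1
      _ = (ν i A).toReal := h3
      _ ≤ B := h5
  have hfun : (fun y : Fin P → ℝ =>
      (1 / (P : ℝ)) * ((1 / ε) * ∑ i : Fin P, (hST lam (y i + ε) - hST lam (y i))))
      = fun y => (1 / (P : ℝ)) * ((1 / ε) * (∑ i : Fin P, X i) y) := by
    funext y
    simp only [Finset.sum_apply]
    rfl
  rw [hfun, variance_const_mul, variance_const_mul, hsum]
  have hsumle : ∑ i : Fin P, variance (X i) μpi ≤ (P:ℝ) * B := by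
    calc ∑ i : Fin P, variance (X i) μpi ≤ ∑ _i : Fin P, B :=
          Finset.sum_le_sum fun i _ => hvar_i i
      _ = (P:ℝ) * B := by simp [Finset.sum_const, mul_comm]
  have hBpos : 0 ≤ B := by rw [hB]; positivity
  calc (1 / (P:ℝ)) ^ 2 * ((1 / ε) ^ 2 * ∑ i : Fin P, variance (X i) μpi)
      ≤ (1 / (P:ℝ)) ^ 2 * ((1 / ε) ^ 2 * ((P:ℝ) * B)) := by
        refine mul_le_mul_of_nonneg_left (mul_le_mul_of_nonneg_left hsumle (by positivity)) ?_
        positivity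
    _ = Real.sqrt 2 / (Real.sqrt Real.pi * σ * P * ε) := by
        rw [hB]
        have hsπ : Real.sqrt Real.pi ≠ 0 := by positivity
        field_simp
        try ring
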